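/- The intersection of two finitely generated subgroups of a free group is finitely generated. That is, if H and K are subgroups of the free group FreeGroup α and both H and K are finitely generated, then H ∩ K is finitely generated. -/

import Mathlib

open List Subgroup

namespace HowsonAux

variable {α : Type} [DecidableEq α]

/-- Multiplying on the left by a single letter either prepends it or deletes the head. -/
lemma letter_mul (ℓ : α × Bool) (x : FreeGroup α) :
    (FreeGroup.mk [ℓ] * x).toWord = ℓ :: x.toWord ∨
      (FreeGroup.mk [ℓ] * x).toWord = x.toWord.tail := by
  have key : (FreeGroup.mk [ℓ] * x) = FreeGroup.mk (ℓ :: x.toWord) := by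
    conv_lhs => rw [← FreeGroup.mk_toWord (x := x)]
    rw [FreeGroup.mul_mk]; rfl
  rw [key, FreeGroup.toWord_mk, FreeGroup.reduce.cons, FreeGroup.reduce_toWord]
  cases h : x.toWord with
  | nil => left; simp
  | cons hd tl =>
    by_cases hc : ℓ.1 = hd.1 ∧ ℓ.2 = !hd.2
    · right; simp [hc]
    · left; simp [hc]

/-- Multiplying on the left by `mk w` : the result is `u ++ v` with `v` a suffix of the
word of `g` and `|u| ≤ |w|`. -/
lemma mk_mul_structure (w : List (α × Bool)) (g : FreeGroup α) :
    ∃ u v, (FreeGroup.mk w * g).toWord = u ++ v ∧ v <:+ g.toWord ∧ u.length ≤ w.length := by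
  induction w with
  | nil =>
    refine ⟨[], g.toWord, ?_, suffix_rfl, by simp⟩
    have : FreeGroup.mk ([] : List (α × Bool)) = 1 := by
      rw [← FreeGroup.toWord_one, FreeGroup.mk_toWord]
    simp [this]
  | cons ℓ w ih =>
    obtain ⟨u, v, h1, h2, h3⟩ := ih
    have hsplit : FreeGroup.mk (ℓ :: w) * g = FreeGroup.mk [ℓ] * (FreeGroup.mk w * g) := by
      rw [← mul_assoc, FreeGroup.mul_mk]; rfl
    rcases letter_mul ℓ (FreeGroup.mk w * g) with h | h
    · exact ⟨ℓ :: u, v, by rw [hsplit, h, h1]; rfl, h2, by simpa using Nat.succ_le_succ h3⟩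
    · rw [h1] at h
      cases u with
      | nil =>
        refine ⟨[], v.tail, by rw [hsplit]; simpa using h, ?_, by simp⟩
        exact (List.tail_suffix v).trans h2
      | cons a u' =>
        exact ⟨u', v, by rw [hsplit, h]; rfl, h2,
          le_trans (Nat.le_succ _) (by simpa using Nat.le_succ_of_le h3)⟩

set_option linter.unusedSectionVars false in
/-- Suffix dichotomy for an append. -/
lemma suffix_append_cases {q u v : List (α × Bool)} (h : q <:+ u ++ v) :
    q <:+ v ∨ ∃ u₁ u₂, u = u₁ ++ u₂ ∧ q = u₂ ++ v := by
  obtain ⟨t, ht⟩ := h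
  rcases List.append_eq_append_iff.mp ht with ⟨a', ha1, ha2⟩ | ⟨c', hc1, hc2⟩
  · right; exact ⟨t, a', ha1, ha2⟩
  · left; exact ⟨c', hc2.symm⟩

/-- Quasiconvexity: if all generators have norm ≤ N then every suffix of the reduced word
of an element of the subgroup is within N of the subgroup. -/
lemma quasiconvex (S : Finset (FreeGroup α)) (N : ℕ)
    (hN : ∀ s ∈ S, FreeGroup.norm s ≤ N)
    {g : FreeGroup α} (hg : g ∈ Subgroup.closure (S : Set (FreeGroup α)))
    {q : List (α × Bool)} (hq : q <:+ g.toWord) :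
    ∃ a : FreeGroup α, a * FreeGroup.mk q ∈ Subgroup.closure (S : Set (FreeGroup α)) ∧
      FreeGroup.norm a ≤ N := by
  have hg' : g ∈ Submonoid.closure ((S : Set (FreeGroup α)) ∪ (S : Set (FreeGroup α))⁻¹) := by
    rw [← Subgroup.closure_toSubmonoid]; exact hg
  obtain ⟨l, hl, hprod⟩ := Submonoid.exists_list_of_mem_closure hg'
  subst hprod
  clear hg hg'
  induction l with
  | nil =>
    have hq' : q = [] := by simpa using hq
    have : FreeGroup.mk ([] : List (α × Bool)) = 1 := by
      rw [← FreeGroup.toWord_one, FreeGroup.mk_toWord]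
    refine ⟨1, ?_, by simp⟩
    rw [hq', this, mul_one]
    exact one_mem _
  | cons s l ih =>
    have hs : s ∈ (S : Set (FreeGroup α)) ∪ (S : Set (FreeGroup α))⁻¹ := hl s (by simp)
    have hl' : ∀ y ∈ l, y ∈ (S : Set (FreeGroup α)) ∪ (S : Set (FreeGroup α))⁻¹ :=
      fun y hy => hl y (by simp [hy])
    have hmem : ∀ y ∈ s :: l, y ∈ Subgroup.closure (S : Set (FreeGroup α)) := by
      intro y hy
      rcases hl y hy with h | h
      · exact Subgroup.subset_closure h
      · rw [Set.mem_inv] at h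
        simpa using inv_mem (Subgroup.subset_closure h)
    rw [List.prod_cons] at hq
    obtain ⟨u, v, h1, h2, h3⟩ := mk_mul_structure s.toWord l.prod
    rw [FreeGroup.mk_toWord] at h1
    rw [h1] at hq
    rcases suffix_append_cases hq with hqv | ⟨u₁, u₂, hu, hquv⟩
    · exact ih hl' (hqv.trans h2)
    · refine ⟨FreeGroup.mk u₁, ?_, ?_⟩
      · have : FreeGroup.mk u₁ * FreeGroup.mk q = s * l.prod := by
          rw [FreeGroup.mul_mk, hquv, ← List.append_assoc, ← hu, ← h1, FreeGroup.mk_toWord]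
        rw [this]
        exact mul_mem (hmem s (by simp))
          (list_prod_mem (fun y hy => hmem y (by simp [hy])))
      · have hNs : FreeGroup.norm s ≤ N := by
          rcases hs with h | h
          · exact hN s h
          · rw [Set.mem_inv] at h
            calc FreeGroup.norm s = FreeGroup.norm s⁻¹ := FreeGroup.norm_inv_eq.symm
            _ ≤ N := hN _ h
        calc FreeGroup.norm (FreeGroup.mk u₁) ≤ u₁.length := FreeGroup.norm_mk_le
          _ ≤ u.length := by rw [hu]; simp
          _ ≤ s.toWord.length := h3
          _ = FreeGroup.norm s := rfl
          _ ≤ N := hNs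

/-- The subgroup of elements whose reduced word only uses letters from `L`. -/
def lettersIn (L : Finset α) : Subgroup (FreeGroup α) where
  carrier := {x | ∀ p ∈ x.toWord, p.1 ∈ L}
  one_mem' := by simp
  mul_mem' {x y} hx hy := by
    intro p hp
    have := (FreeGroup.toWord_mul_sublist x y).subset hp
    rcases List.mem_append.mp this with h | h
    · exact hx p h
    · exact hy p h
  inv_mem' {x} hx := by
    intro p hp
    rw [FreeGroup.toWord_inv, FreeGroup.invRev] at hp
    simp only [List.mem_reverse, List.mem_map] at hp
    obtain ⟨a, ha, rfl⟩ := hp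
    exact hx a ha

lemma mem_lettersIn {L : Finset α} {x : FreeGroup α} :
    x ∈ lettersIn L ↔ ∀ p ∈ x.toWord, p.1 ∈ L := Iff.rfl

/-- The ball of radius N with letters in a finite set is finite. -/
lemma finite_ball (L : Finset α) (N : ℕ) :
    {x : FreeGroup α | FreeGroup.norm x ≤ N ∧ x ∈ lettersIn L}.Finite := by
  have hinj : Set.InjOn FreeGroup.toWord
      {x : FreeGroup α | FreeGroup.norm x ≤ N ∧ x ∈ lettersIn L} :=
    fun a _ b _ h => FreeGroup.toWord_injective h
  rw [← Set.finite_image_iff hinj]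
  have hfin : ((fun l : List (↥L × Bool) => l.map (fun p => ((p.1 : α), p.2))) ''
      {l | l.length ≤ N}).Finite :=
    (List.finite_length_le _ N).image _
  refine hfin.subset ?_
  rintro w ⟨x, ⟨hx1, hx2⟩, rfl⟩
  refine ⟨x.toWord.attach.map (fun p => ((⟨p.1.1, hx2 p.1 p.2⟩ : ↥L), p.1.2)), by simpa using (show x.toWord.length ≤ N from hx1), ?_⟩
  simp only [List.map_map]
  conv_rhs => rw [← List.attach_map_subtype_val (x.toWord)]
  rfl

end HowsonAux

/-- Theorem 4.3 (Howson property): the intersection of two finitely generated subgroups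
of a free group is finitely generated. -/
theorem freeGroup_inf_fg {α : Type} (H K : Subgroup (FreeGroup α))
    (hH : H.FG) (hK : K.FG) : (H ⊓ K).FG := by
  classical
  obtain ⟨SH, hSH⟩ := hH
  obtain ⟨SK, hSK⟩ := hK
  set L : Finset α := (SH ∪ SK).sup (fun s => (s.toWord.map Prod.fst).toFinset) with hLdef
  have hletters : ∀ s ∈ SH ∪ SK, s ∈ HowsonAux.lettersIn L := by
    intro s hs p hp
    have h1 : (s.toWord.map Prod.fst).toFinset ≤ L := by
      rw [hLdef]; exact Finset.le_sup (f := fun s : FreeGroup α => (s.toWord.map Prod.fst).toFinset) hs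
    exact h1 (by simp only [List.mem_toFinset, List.mem_map]; exact ⟨p, hp, rfl⟩)
  have hHL : H ≤ HowsonAux.lettersIn L := by
    rw [← hSH, Subgroup.closure_le]
    exact fun s hs => hletters s (Finset.mem_union_left _ hs)
  have hKL : K ≤ HowsonAux.lettersIn L := by
    rw [← hSK, Subgroup.closure_le]
    exact fun s hs => hletters s (Finset.mem_union_right _ hs)
  set NH := SH.sup FreeGroup.norm with hNHdef
  set NK := SK.sup FreeGroup.norm with hNKdef
  have hNH : ∀ s ∈ SH, FreeGroup.norm s ≤ NH := fun s hs => Finset.le_sup hs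
  have hNK : ∀ s ∈ SK, FreeGroup.norm s ≤ NK := fun s hs => Finset.le_sup hs
  set Bfin := (HowsonAux.finite_ball L NH).toFinset with hBdef
  set Cfin := (HowsonAux.finite_ball L NK).toFinset with hCdef
  set P := (Bfin ×ˢ Cfin).card with hPdef
  set T : Set (FreeGroup α) := {x | x ∈ H ⊓ K ∧ FreeGroup.norm x ≤ 2 * P} with hTdef
  have hTfin : T.Finite := (HowsonAux.finite_ball L (2 * P)).subset
    (fun x hx => ⟨hx.2, hHL (Subgroup.mem_inf.mp hx.1).1⟩)
  have main : ∀ n : ℕ, ∀ g ∈ H ⊓ K, FreeGroup.norm g < n → g ∈ Subgroup.closure T := by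
    intro n
    induction n with
    | zero => exact fun g _ h => absurd h (Nat.not_lt_zero _)
    | succ n ih =>
      intro g hg hlt
      by_cases hshort : FreeGroup.norm g ≤ 2 * P
      · exact Subgroup.subset_closure ⟨hg, hshort⟩
      push_neg at hshort
      obtain ⟨hgH, hgK⟩ := Subgroup.mem_inf.mp hg
      set w := g.toWord with hwdef
      have hn : w.length = FreeGroup.norm g := rfl
      set q : Fin (P + 1) → FreeGroup α :=
        fun t => FreeGroup.mk (w.drop (w.length - (t : ℕ))) with hqdef
      have hqL : ∀ t : Fin (P + 1), q t ∈ HowsonAux.lettersIn L := by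
        intro t p hp
        rw [hqdef] at hp
        simp only [FreeGroup.toWord_mk] at hp
        have h1 : p ∈ w.drop (w.length - (t : ℕ)) :=
          (FreeGroup.Red.sublist FreeGroup.reduce.red).subset hp
        exact hHL hgH p (List.drop_subset _ _ h1)
      have hqnorm : ∀ t : Fin (P + 1), FreeGroup.norm (q t) ≤ (t : ℕ) := by
        intro t
        calc FreeGroup.norm (q t) ≤ (w.drop (w.length - (t : ℕ))).length :=
              FreeGroup.norm_mk_le
          _ ≤ (t : ℕ) := by rw [List.length_drop]; omega
      have hexH : ∀ t : Fin (P + 1), ∃ a : FreeGroup α,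
          (a * q t ∈ H ∧ FreeGroup.norm a ≤ NH) ∧ a ∈ HowsonAux.lettersIn L := by
        intro t
        obtain ⟨a, ha1, ha2⟩ := HowsonAux.quasiconvex SH NH hNH
          (g := g) (by rw [hSH]; exact hgH)
          (q := w.drop (w.length - (t : ℕ))) (List.drop_suffix _ _)
        rw [hSH] at ha1
        refine ⟨a, ⟨ha1, ha2⟩, ?_⟩
        convert mul_mem (hHL ha1) (inv_mem (hqL t)) using 1
        exact (mul_inv_cancel_right a (q t)).symm
      have hexK : ∀ t : Fin (P + 1), ∃ b : FreeGroup α,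
          (b * q t ∈ K ∧ FreeGroup.norm b ≤ NK) ∧ b ∈ HowsonAux.lettersIn L := by
        intro t
        obtain ⟨b, hb1, hb2⟩ := HowsonAux.quasiconvex SK NK hNK
          (g := g) (by rw [hSK]; exact hgK)
          (q := w.drop (w.length - (t : ℕ))) (List.drop_suffix _ _)
        rw [hSK] at hb1
        refine ⟨b, ⟨hb1, hb2⟩, ?_⟩
        convert mul_mem (hKL hb1) (inv_mem (hqL t)) using 1
        exact (mul_inv_cancel_right b (q t)).symm
      choose A hA hAL using hexH
      choose B hB hBL using hexK
      have key : ∀ i j : Fin (P + 1), (i : ℕ) < (j : ℕ) → A i = A j → B i = B j →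
          g ∈ Subgroup.closure T := by
        intro i j hij hAij hBij
        have hjP : (j : ℕ) ≤ P := Nat.lt_succ_iff.mp j.2
        have hiP : (i : ℕ) ≤ P := Nat.lt_succ_iff.mp i.2
        have hδH : (q i)⁻¹ * q j ∈ H := by
          have heq : (q i)⁻¹ * q j = (A i * q i)⁻¹ * (A j * q j) := by
            rw [← hAij]; group
          rw [heq]
          exact mul_mem (inv_mem (hA i).1) (hA j).1
        have hδK : (q i)⁻¹ * q j ∈ K := by
          have heq : (q i)⁻¹ * q j = (B i * q i)⁻¹ * (B j * q j) := by
            rw [← hBij]; group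
          rw [heq]
          exact mul_mem (inv_mem (hB i).1) (hB j).1
        set δ : FreeGroup α := (q i)⁻¹ * q j with hδdef
        have hδmem : δ ∈ H ⊓ K := Subgroup.mem_inf.mpr ⟨hδH, hδK⟩
        have hδT : δ ∈ T := by
          refine ⟨hδmem, ?_⟩
          calc FreeGroup.norm δ ≤ FreeGroup.norm (q i)⁻¹ + FreeGroup.norm (q j) :=
                FreeGroup.norm_mul_le _ _
            _ ≤ (i : ℕ) + (j : ℕ) := by
                rw [FreeGroup.norm_inv_eq]
                exact Nat.add_le_add (hqnorm i) (hqnorm j)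
            _ ≤ 2 * P := by omega
        set g' : FreeGroup α := FreeGroup.mk (w.take (w.length - (j : ℕ))) * q i with hg'def
        have hgeq : g = g' * δ := by
          have h1 : g = FreeGroup.mk (w.take (w.length - (j : ℕ))) * q j := by
            rw [hqdef]
            simp only []
            rw [FreeGroup.mul_mk, List.take_append_drop, hwdef, FreeGroup.mk_toWord]
          rw [h1, hg'def, hδdef]
          group
        have hg'mem : g' ∈ H ⊓ K := by
          have : g' = g * δ⁻¹ := by rw [hgeq]; group
          rw [this]
          exact mul_mem hg (inv_mem hδmem)
        have hg'norm : FreeGroup.norm g' < FreeGroup.norm g := by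
          have h1 : g' = FreeGroup.mk
              (w.take (w.length - (j : ℕ)) ++ w.drop (w.length - (i : ℕ))) := by
            rw [hg'def, hqdef, FreeGroup.mul_mk]
          have h2 : FreeGroup.norm g' ≤
              (w.take (w.length - (j : ℕ))).length + (w.drop (w.length - (i : ℕ))).length := by
            rw [h1]
            calc FreeGroup.norm _ ≤ _ := FreeGroup.norm_mk_le
              _ = _ := List.length_append
          rw [List.length_take, List.length_drop] at h2
          rw [← hn]
          have hnbig : 2 * P < w.length := by rw [hn]; exact hshort
          omega
        have hg'cl : g' ∈ Subgroup.closure T := by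
          apply ih g' hg'mem
          omega
        rw [hgeq]
        exact mul_mem hg'cl (Subgroup.subset_closure hδT)
      have hcard : (Bfin ×ˢ Cfin).card < (Finset.univ : Finset (Fin (P + 1))).card := by
        simp [← hPdef]
      obtain ⟨i, _, j, _, hne, heq⟩ := Finset.exists_ne_map_eq_of_card_lt_of_maps_to hcard
        (f := fun t : Fin (P + 1) => (A t, B t))
        (fun t _ => by
          rw [Finset.mem_coe, Finset.mem_product, hBdef, hCdef, Set.Finite.mem_toFinset,
            Set.Finite.mem_toFinset]
          exact ⟨⟨(hA t).2, hAL t⟩, ⟨(hB t).2, hBL t⟩⟩)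
      have hAeq : A i = A j := congrArg Prod.fst heq
      have hBeq : B i = B j := congrArg Prod.snd heq
      rcases lt_or_gt_of_ne (fun h : (i : ℕ) = (j : ℕ) => hne (Fin.ext h)) with h | h
      · exact key i j h hAeq hBeq
      · exact key j i h hAeq.symm hBeq.symm
  refine ⟨hTfin.toFinset, ?_⟩
  rw [Set.Finite.coe_toFinset]
  apply _root_.le_antisymm
  · rw [Subgroup.closure_le]
    exact fun x hx => hx.1
  · exact fun g hg => main (FreeGroup.norm g + 1) g hg (Nat.lt_succ_self _)
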